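/- Let f(x) = −2η^{-1}√x + γ^{-1} x(log x − 1) for x > 0 with η, γ > 0. Then the function x ↦ 1/f''(x) = ( (η^{-1}/2) x^{-3/2} + γ^{-1} x^{-1} )^{-1} is convex on (0, ∞). -/

import Mathlib

open Set Filter

private lemma inv_second_deriv_convex_aux (a b : ℝ) (ha : 0 < a) (hb : 0 < b) :
    ConvexOn ℝ (Set.Ioi (0:ℝ))
      (fun x : ℝ => (a * x ^ (-(3:ℝ)/2) + b * x ^ (-(1:ℝ)))⁻¹) := by
  set D : ℝ → ℝ := fun x => a * x ^ (-(3:ℝ)/2) + b * x ^ (-(1:ℝ)) with hD_def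
  set D1 : ℝ → ℝ := fun x =>
    a * (-(3:ℝ)/2 * x ^ (-(3:ℝ)/2 - 1)) + b * (-(1:ℝ) * x ^ (-(1:ℝ) - 1)) with hD1_def
  set D2 : ℝ → ℝ := fun x =>
    a * (-(3:ℝ)/2 * ((-(3:ℝ)/2 - 1) * x ^ (-(3:ℝ)/2 - 1 - 1)))
      + b * (-(1:ℝ) * ((-(1:ℝ) - 1) * x ^ (-(1:ℝ) - 1 - 1))) with hD2_def
  set g : ℝ → ℝ := fun x => (D x)⁻¹ with hg_def
  set G1 : ℝ → ℝ := fun x => -D1 x / D x ^ 2 with hG1_def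
  set G2 : ℝ → ℝ := fun x =>
    (-D2 x * D x ^ 2 - -D1 x * ((2:ℕ) * D x ^ 1 * D1 x)) / (D x ^ 2) ^ 2 with hG2_def
  have hDpos : ∀ x ∈ Ioi (0:ℝ), 0 < D x := by
    intro x hx
    have hx' : (0:ℝ) < x := hx
    simp only [hD_def]
    positivity
  have hd : ∀ x ∈ Ioi (0:ℝ), HasDerivAt D (D1 x) x := by
    intro x hx
    have hx' : (0:ℝ) < x := hx
    exact ((Real.hasDerivAt_rpow_const (p := -(3:ℝ)/2) (Or.inl hx'.ne')).const_mul a).add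
      ((Real.hasDerivAt_rpow_const (p := -(1:ℝ)) (Or.inl hx'.ne')).const_mul b)
  have hd1 : ∀ x ∈ Ioi (0:ℝ), HasDerivAt D1 (D2 x) x := by
    intro x hx
    have hx' : (0:ℝ) < x := hx
    exact (((Real.hasDerivAt_rpow_const (p := -(3:ℝ)/2 - 1)
        (Or.inl hx'.ne')).const_mul (-(3:ℝ)/2)).const_mul a).add
      (((Real.hasDerivAt_rpow_const (p := -(1:ℝ) - 1)
        (Or.inl hx'.ne')).const_mul (-(1:ℝ))).const_mul b)
  have hg : ∀ x ∈ Ioi (0:ℝ), HasDerivAt g (G1 x) x := by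
    intro x hx
    have := (hd x hx).inv (hDpos x hx).ne'
    simpa [hG1_def, neg_div, show g = D⁻¹ from rfl] using this
  have hg1 : ∀ x ∈ Ioi (0:ℝ), HasDerivAt G1 (G2 x) x := by
    intro x hx
    exact ((hd1 x hx).neg).div ((hd x hx).pow 2)
      (pow_ne_zero 2 (hDpos x hx).ne')
  have hopen : ∀ x ∈ Ioi (0:ℝ), Ioi (0:ℝ) ∈ nhds x := fun x hx => isOpen_Ioi.mem_nhds hx
  have hderiv_eq : ∀ x ∈ Ioi (0:ℝ), deriv g x = G1 x := fun x hx => (hg x hx).deriv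
  have hEq : ∀ x ∈ Ioi (0:ℝ), deriv g =ᶠ[nhds x] G1 :=
    fun x hx => eventually_of_mem (hopen x hx) hderiv_eq
  apply convexOn_of_deriv2_nonneg (convex_Ioi 0)
  · intro x hx
    exact ((hg x hx).differentiableAt.continuousAt).continuousWithinAt
  · rw [interior_Ioi]
    exact fun x hx => (hg x hx).differentiableAt.differentiableWithinAt
  · rw [interior_Ioi]
    intro x hx
    exact ((hg1 x hx).differentiableAt.congr_of_eventuallyEq (hEq x hx)).differentiableWithinAt
  · rw [interior_Ioi]
    intro x hx
    have hx' : (0:ℝ) < x := hx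
    have h2 : deriv^[2] g x = G2 x := by
      have : deriv (deriv g) x = deriv G1 x := (hEq x hx).deriv_eq
      simp only [Function.iterate_succ, Function.iterate_zero, Function.comp_apply, id_eq]
      rw [this, (hg1 x hx).deriv]
    rw [h2]
    -- substitute u = x ^ (-1/2)
    set u : ℝ := x ^ (-(1:ℝ)/2) with hu_def
    have hu : 0 < u := Real.rpow_pos_of_pos hx' _
    have hpow : ∀ n : ℕ, x ^ ((-(1:ℝ)/2) * (n:ℝ)) = u ^ n := by
      intro n
      rw [Real.rpow_mul hx'.le, Real.rpow_natCast]
    have e2 : x ^ (-(1:ℝ)) = u ^ 2 := by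
      rw [← hpow 2]; norm_num
    have e3 : x ^ (-(3:ℝ)/2) = u ^ 3 := by
      rw [← hpow 3]; norm_num
    have e4 : x ^ (-(1:ℝ) - 1) = u ^ 4 := by
      rw [← hpow 4]; norm_num
    have e5 : x ^ (-(3:ℝ)/2 - 1) = u ^ 5 := by
      rw [← hpow 5]; norm_num
    have e6 : x ^ (-(1:ℝ) - 1 - 1) = u ^ 6 := by
      rw [← hpow 6]; norm_num
    have e7 : x ^ (-(3:ℝ)/2 - 1 - 1) = u ^ 7 := by
      rw [← hpow 7]; norm_num
    simp only [hG2_def, hD_def, hD1_def, hD2_def, e2, e3, e4, e5, e6, e7]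
    apply div_nonneg _ (by positivity)
    have key : -(a * (-(3:ℝ)/2 * ((-(3:ℝ)/2 - 1) * u ^ 7))
          + b * (-(1:ℝ) * ((-(1:ℝ) - 1) * u ^ 6))) * (a * u ^ 3 + b * u ^ 2) ^ 2
        - -(a * (-(3:ℝ)/2 * u ^ 5) + b * (-(1:ℝ) * u ^ 4))
          * ((2:ℕ) * (a * u ^ 3 + b * u ^ 2) ^ 1
            * (a * (-(3:ℝ)/2 * u ^ 5) + b * (-(1:ℝ) * u ^ 4)))
        = (a * u ^ 3 + b * u ^ 2) * ((3/4) * a ^ 2 * u ^ 10 + (1/4) * a * b * u ^ 9) := by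
      push_cast
      ring
    rw [key]
    positivity

theorem inv_second_deriv_convex (η γ : ℝ) (hη : 0 < η) (hγ : 0 < γ) :
    ConvexOn ℝ (Set.Ioi (0:ℝ))
      (fun x : ℝ => (η⁻¹ / 2 * x ^ (-(3:ℝ)/2) + γ⁻¹ * x⁻¹)⁻¹) := by
  have := inv_second_deriv_convex_aux (η⁻¹ / 2) γ⁻¹ (by positivity) (by positivity)
  simpa [Real.rpow_neg_one] using this
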